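/- Let a₁, a₂, a₃, a₄ ∈ ℝ² be four points in convex position (vertices of a convex quadrilateral, listed in cyclic order a₁, a₂, a₃, a₄). Then the four pairwise sums a₁+a₂, a₂+a₃, a₃+a₄, a₄+a₁ are the vertices of a parallelogram, and the two remaining pairwise sums a₁+a₃ and a₂+a₄ lie in (the closed region bounded by) this parallelogram. -/
import Mathlib

lemma mem_hull4 {p q r w x : ℝ × ℝ} {l1 l2 l3 l4 : ℝ}
    (h1 : 0 ≤ l1) (h2 : 0 ≤ l2) (h3 : 0 ≤ l3) (h4 : 0 ≤ l4)
    (hs : l1 + l2 + l3 + l4 = 1)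
    (hx : x = l1 • p + l2 • q + l3 • r + l4 • w) :
    x ∈ convexHull ℝ ({p, q, r, w} : Set (ℝ × ℝ)) := by
  have key := (convex_convexHull ℝ ({p, q, r, w} : Set (ℝ × ℝ))).sum_mem
    (t := (Finset.univ : Finset (Fin 4))) (w := ![l1, l2, l3, l4]) (z := ![p, q, r, w])
    (by intro i _; fin_cases i <;> assumption)
    (by simp [Fin.sum_univ_four]; linarith)
    (by intro i _; fin_cases i <;> exact subset_convexHull ℝ _ (by simp))
  simpa [Fin.sum_univ_four, ← hx] using key

/-- For four points in convex position in cyclic order `a₁ a₂ a₃ a₄`, the four pairwise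
sums of consecutive points form a parallelogram, and the two remaining pairwise sums
`a₁+a₃` and `a₂+a₄` lie in the closed region bounded by this parallelogram. -/
theorem level2_of_convex_quadrilateral (a₁ a₂ a₃ a₄ : ℝ × ℝ)
    (h₁ : a₁ ∉ convexHull ℝ ({a₂, a₃, a₄} : Set (ℝ × ℝ)))
    (h₂ : a₂ ∉ convexHull ℝ ({a₁, a₃, a₄} : Set (ℝ × ℝ)))
    (h₃ : a₃ ∉ convexHull ℝ ({a₁, a₂, a₄} : Set (ℝ × ℝ)))
    (h₄ : a₄ ∉ convexHull ℝ ({a₁, a₂, a₃} : Set (ℝ × ℝ)))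
    (hcyc : (segment ℝ a₁ a₃ ∩ segment ℝ a₂ a₄).Nonempty) :
    (a₁ + a₂) - (a₂ + a₃) = (a₄ + a₁) - (a₃ + a₄) ∧
    (a₁ + a₂) - (a₄ + a₁) = (a₂ + a₃) - (a₃ + a₄) ∧
    a₁ + a₃ ∈ convexHull ℝ ({a₁ + a₂, a₂ + a₃, a₃ + a₄, a₄ + a₁} : Set (ℝ × ℝ)) ∧
    a₂ + a₄ ∈ convexHull ℝ ({a₁ + a₂, a₂ + a₃, a₃ + a₄, a₄ + a₁} : Set (ℝ × ℝ)) := by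
  obtain ⟨x, hx1, hx2⟩ := hcyc
  obtain ⟨u, v, hu, hv, huv, hE1⟩ := hx1
  obtain ⟨p, q, hp, hq, hpq, hE2⟩ := hx2
  have hu2 : u = 1 - v := by linarith
  have hp2 : p = 1 - q := by linarith
  subst hu2 hp2
  have heq : (1 - v) • a₁ + v • a₃ = (1 - q) • a₂ + q • a₄ := hE1.trans hE2.symm
  have e1 := congrArg Prod.fst heq
  have e2 := congrArg Prod.snd heq
  simp only [Prod.fst_add, Prod.snd_add, Prod.smul_fst, Prod.smul_snd, smul_eq_mul] at e1 e2
  refine ⟨by abel, by abel, ?_, ?_⟩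
  · rcases le_total v q with h | h
    · refine mem_hull4 (l1 := 0) (l2 := 1 - q) (l3 := q - v) (l4 := v)
        le_rfl (by linarith) (by linarith) hv (by linarith) ?_
      refine Prod.ext ?_ ?_ <;>
        simp only [Prod.fst_add, Prod.snd_add, Prod.smul_fst, Prod.smul_snd, smul_eq_mul]
      · linear_combination e1
      · linear_combination e2
    · refine mem_hull4 (l1 := v - q) (l2 := 1 - v) (l3 := 0) (l4 := q)
        (by linarith) (by linarith) le_rfl hq (by linarith) ?_
      refine Prod.ext ?_ ?_ <;>
        simp only [Prod.fst_add, Prod.snd_add, Prod.smul_fst, Prod.smul_snd, smul_eq_mul]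
      · linear_combination e1
      · linear_combination e2
  · rcases le_total v q with h | h
    · refine mem_hull4 (l1 := q - v) (l2 := v) (l3 := 0) (l4 := 1 - q)
        (by linarith) hv le_rfl (by linarith) (by linarith) ?_
      refine Prod.ext ?_ ?_ <;>
        simp only [Prod.fst_add, Prod.snd_add, Prod.smul_fst, Prod.smul_snd, smul_eq_mul]
      · linear_combination -e1
      · linear_combination -e2
    · refine mem_hull4 (l1 := 0) (l2 := q) (l3 := v - q) (l4 := 1 - v)
        le_rfl hq (by linarith) (by linarith) (by linarith) ?_
      refine Prod.ext ?_ ?_ <;>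
        simp only [Prod.fst_add, Prod.snd_add, Prod.smul_fst, Prod.smul_snd, smul_eq_mul]
      · linear_combination -e1
      · linear_combination -e2
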